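/- The quotient map SL(2,ℤ) → PSL(2,ℤ) restricts to an injective homomorphism on the commutator subgroup of SL(2,ℤ). -/

import Mathlib

abbrev SL2Z := Matrix.SpecialLinearGroup (Fin 2) ℤ

instance : Fact (Even (Fintype.card (Fin 2))) := ⟨by decide⟩

/-- The subgroup `{±I}` of `SL(2,ℤ)`. -/
def pmI : Subgroup SL2Z := Subgroup.zpowers (-1 : SL2Z)

instance : pmI.Normal := by
  constructor
  intro x hx g
  obtain ⟨k, rfl⟩ := hx
  have hc : ∀ h : SL2Z, (-1 : SL2Z) ^ k * h = h * (-1 : SL2Z) ^ k := fun h =>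
    ((Commute.neg_one_left h).zpow_left k).eq
  rw [← hc g, mul_assoc, mul_inv_cancel, mul_one]
  exact ⟨k, rfl⟩

/-- `PSL(2,ℤ) = SL(2,ℤ)/{±I}`. -/
abbrev PSL2Z := SL2Z ⧸ pmI

/- auxiliary development -/

set_option maxRecDepth 10000

structure M4 where
  a : ZMod 4
  b : ZMod 4
  c : ZMod 4
  d : ZMod 4
  deriving DecidableEq, Fintype

def M4.mul (x y : M4) : M4 :=
  ⟨x.a*y.a + x.b*y.c, x.a*y.b + x.b*y.d, x.c*y.a + x.d*y.c, x.c*y.b + x.d*y.d⟩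

def M4.det (x : M4) : ZMod 4 := x.a * x.d - x.b * x.c

def DL : List M4 :=
  [⟨0,1,3,3⟩, ⟨0,3,1,3⟩, ⟨1,0,0,1⟩, ⟨1,1,1,2⟩, ⟨1,2,2,1⟩, ⟨1,3,3,2⟩,
   ⟨2,1,1,1⟩, ⟨2,3,3,1⟩, ⟨3,0,2,3⟩, ⟨3,1,3,0⟩, ⟨3,2,0,3⟩, ⟨3,3,1,0⟩]

set_option maxHeartbeats 2000000 in
lemma k1 : ∀ x : M4, x.det = 1 → ∀ y : M4, y.det = 1 →
    ∃ m ∈ DL, M4.mul x y = M4.mul m (M4.mul y x) := by decide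

lemma k2 : ∀ m ∈ DL, ∀ n ∈ DL, M4.mul m n ∈ DL := by decide

lemma k3 : (⟨1,0,0,1⟩ : M4) ∈ DL := by decide

lemma k4 : ∀ m ∈ DL, (⟨m.d, -m.b, -m.c, m.a⟩ : M4) ∈ DL := by decide

lemma k6 : ∀ m ∈ DL, m.det = 1 := by decide

lemma k5 : (⟨3,0,0,3⟩ : M4) ∉ DL := by decide

abbrev G4 := Matrix.SpecialLinearGroup (Fin 2) (ZMod 4)

def toMat (x : M4) : Matrix (Fin 2) (Fin 2) (ZMod 4) := !![x.a, x.b; x.c, x.d]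

def toM4 (g : G4) : M4 := ⟨g.1 0 0, g.1 0 1, g.1 1 0, g.1 1 1⟩

lemma toMat_toM4 (g : G4) : toMat (toM4 g) = g.1 := (Matrix.eta_fin_two g.1).symm

lemma toMat_inj : Function.Injective toMat := by
  intro x y h
  have h00 := congrFun (congrFun h 0) 0
  have h01 := congrFun (congrFun h 0) 1
  have h10 := congrFun (congrFun h 1) 0
  have h11 := congrFun (congrFun h 1) 1
  simp [toMat] at h00 h01 h10 h11
  cases x; cases y; simp_all

lemma toMat_mul (x y : M4) : toMat (M4.mul x y) = toMat x * toMat y := by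
  rw [toMat, toMat, toMat, Matrix.mul_fin_two, M4.mul]

lemma toM4_mul (g h : G4) : toM4 (g * h) = M4.mul (toM4 g) (toM4 h) := by
  apply toMat_inj
  rw [toMat_mul, toMat_toM4, toMat_toM4, toMat_toM4]
  rfl

lemma toM4_det (g : G4) : (toM4 g).det = 1 := by
  have := g.2
  rw [Matrix.det_fin_two] at this
  simpa [M4.det, toM4] using this

lemma toM4_inv (g : G4) : toM4 g⁻¹ = ⟨(toM4 g).d, -(toM4 g).b, -(toM4 g).c, (toM4 g).a⟩ := by
  rw [Matrix.SpecialLinearGroup.SL2_inv_expl]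
  rfl

def ψ : SL2Z →* G4 := Matrix.SpecialLinearGroup.map (Int.castRingHom (ZMod 4))

def K : Subgroup SL2Z where
  carrier := {g | toM4 (ψ g) ∈ DL}
  one_mem' := by
    show toM4 (ψ 1) ∈ DL
    rw [map_one]
    have : toM4 (1 : G4) = ⟨1,0,0,1⟩ := by
      simp [toM4, Matrix.SpecialLinearGroup.coe_one, Matrix.one_apply]
    rw [this]; exact k3
  mul_mem' := by
    intro x y hx hy
    show toM4 (ψ (x * y)) ∈ DL
    rw [map_mul, toM4_mul]
    exact k2 _ hx _ hy
  inv_mem' := by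
    intro x hx
    show toM4 (ψ x⁻¹) ∈ DL
    rw [map_inv, toM4_inv]
    exact k4 _ hx

open scoped commutatorElement in
lemma comm_le_K : commutator SL2Z ≤ K := by
  rw [commutator_def, Subgroup.commutator_le]
  intro x _ y _
  show toM4 (ψ ⁅x, y⁆) ∈ DL
  obtain ⟨m, hm, hmul⟩ := k1 (toM4 (ψ x)) (toM4_det _) (toM4 (ψ y)) (toM4_det _)
  have hMdet : (toMat m).det = 1 := by
    have := k6 m hm
    rw [M4.det] at this
    rw [toMat, Matrix.det_fin_two_of]
    exact this
  set Mg : G4 := ⟨toMat m, hMdet⟩ with hMg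
  have hm4 : toM4 Mg = m := toMat_inj (toMat_toM4 Mg)
  have hG : ψ x * ψ y = Mg * (ψ y * ψ x) := by
    apply Subtype.ext
    have := congrArg toMat hmul
    rw [toMat_mul, toMat_mul, toMat_mul, toMat_toM4, toMat_toM4] at this
    simpa using this
  have hcomm : ψ ⁅x, y⁆ = Mg := by
    rw [commutatorElement_def, map_mul, map_mul, map_mul, map_inv, map_inv]
    have : ψ x * ψ y * (ψ x)⁻¹ * (ψ y)⁻¹ = (ψ x * ψ y) * (ψ y * ψ x)⁻¹ := by
      group
    rw [this, hG, mul_assoc, mul_inv_cancel, mul_one]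
  rw [hcomm, hm4]
  exact hm

lemma neg_one_not_in_K : (-1 : SL2Z) ∉ K := by
  show toM4 (ψ (-1)) ∈ DL → False
  intro h
  have : toM4 (ψ (-1)) = ⟨3,0,0,3⟩ := by decide
  rw [this] at h
  exact k5 h

lemma neg_one_not_in_comm : (-1 : SL2Z) ∉ commutator SL2Z :=
  fun h => neg_one_not_in_K (comm_le_K h)

theorem stmt13 :
    Function.Injective
      (fun g : commutator SL2Z => QuotientGroup.mk' pmI (g : SL2Z)) := by
  intro g₁ g₂ h
  simp only [QuotientGroup.mk'_eq_mk'] at h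
  obtain ⟨z, hz, hmul⟩ := h
  obtain ⟨k, rfl⟩ := hz
  beta_reduce at hmul
  rcases Int.even_or_odd k with hk | hk
  · rw [hk.neg_one_zpow, mul_one] at hmul
    exact Subtype.ext hmul
  · obtain ⟨j, rfl⟩ := hk
    rw [zpow_add_one, zpow_mul] at hmul
    have h2 : ((-1 : SL2Z) ^ (2 : ℤ)) = 1 := by
      rw [zpow_two]; simp
    rw [h2, one_zpow, one_mul] at hmul
    exfalso
    apply neg_one_not_in_comm
    have : (-1 : SL2Z) = (g₁ : SL2Z)⁻¹ * g₂ := by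
      rw [← hmul, ← mul_assoc, inv_mul_cancel, one_mul]
    rw [this]
    exact mul_mem (inv_mem g₁.2) g₂.2
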